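/- Consider the ODE system Ḣ_2 = -μ(Ẽ + m H_2 H_2^⊤) H_2 where Ẽ ∈ ℝ^{n×n} is a fixed positive semidefinite matrix and μ, m > 0. Then the Gram matrix G(t) = H_2(t) H_2(t)^⊤ satisfies Ġ = -μ(Ẽ G + G Ẽ + 2m G²), and consequently the trace satisfies d/dt tr(G) ≤ -2μm · tr(G²) ≤ -(2μm/n) tr(G)², hence tr(G(t)) → 0 as t → ∞; in particular H_2(t) → 0. -/

import Mathlib

open Matrix

private lemma psd_trace_nonneg {n : ℕ} {M : Matrix (Fin n) (Fin n) ℝ} (h : M.PosSemidef) :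
    0 ≤ M.trace := by
  rw [Matrix.trace]
  refine Finset.sum_nonneg fun i _ => ?_
  exact h.diag_nonneg

theorem stmt_12 (n k : ℕ) (hn : 0 < n) (μ m : ℝ) (hμ : 0 < μ) (hm : 0 < m)
    (E : Matrix (Fin n) (Fin n) ℝ) (hE : E.PosSemidef)
    (H2 : ℝ → Matrix (Fin n) (Fin k) ℝ)
    (hH2 : ∀ t, 0 ≤ t → ∀ i j, HasDerivAt (fun s => H2 s i j)
      ((-(μ • ((E + m • (H2 t * (H2 t)ᵀ)) * H2 t))) i j) t)
    (G : ℝ → Matrix (Fin n) (Fin n) ℝ) (hG : ∀ t, G t = H2 t * (H2 t)ᵀ) :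
    (∀ t, 0 ≤ t → ∀ i j, HasDerivAt (fun s => G s i j)
      ((-(μ • (E * G t + G t * E + (2 * m) • (G t * G t)))) i j) t) ∧
    (∀ t, 0 ≤ t → ∃ d : ℝ, HasDerivAt (fun s => (G s).trace) d t ∧
      d ≤ -(2 * μ * m) * (G t * G t).trace ∧
      d ≤ -(2 * μ * m / n) * (G t).trace ^ 2) ∧
    Filter.Tendsto (fun t => (G t).trace) Filter.atTop (nhds 0) ∧
    (∀ i j, Filter.Tendsto (fun t => H2 t i j) Filter.atTop (nhds 0)) := by
  have hEs : Eᵀ = E := by have h : E.IsSymm := (by simpa using hE.1); exact h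
  have hGsymm : ∀ t, (G t)ᵀ = G t := by
    intro t; rw [hG]; rw [transpose_mul, transpose_transpose]
  -- Part 1
  have part1 : ∀ t, 0 ≤ t → ∀ i j, HasDerivAt (fun s => G s i j)
      ((-(μ • (E * G t + G t * E + (2 * m) • (G t * G t)))) i j) t := by
    intro t ht i j
    have key : (-(μ • ((E + m • (H2 t * (H2 t)ᵀ)) * H2 t))) * (H2 t)ᵀ
        + H2 t * (-(μ • ((E + m • (H2 t * (H2 t)ᵀ)) * H2 t)))ᵀ
        = -(μ • (E * G t + G t * E + (2 * m) • (G t * G t))) := by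
      rw [hG]
      simp only [transpose_neg, transpose_smul, transpose_mul, transpose_add, transpose_transpose,
        hEs, Matrix.neg_mul, Matrix.mul_neg, Matrix.smul_mul, Matrix.mul_smul, Matrix.add_mul,
        Matrix.mul_add, Matrix.mul_assoc]
      module
    have hds : HasDerivAt (fun s => ∑ l, H2 s i l * H2 s j l)
        (∑ l, ((-(μ • ((E + m • (H2 t * (H2 t)ᵀ)) * H2 t))) i l * H2 t j l
          + H2 t i l * (-(μ • ((E + m • (H2 t * (H2 t)ᵀ)) * H2 t))) j l)) t :=
      HasDerivAt.fun_sum fun l _ => (hH2 t ht i l).mul (hH2 t ht j l)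
    have heq : (fun s => G s i j) = fun s => ∑ l, H2 s i l * H2 s j l := by
      funext s; rw [hG]; simp [Matrix.mul_apply]
    rw [heq, ← key]
    convert hds using 1
    simp [Matrix.mul_apply, Matrix.add_apply, Finset.sum_add_distrib, Finset.mul_sum,
      mul_comm, mul_left_comm, mul_assoc]
  -- trace derivative
  set f : ℝ → ℝ := fun t => (G t).trace with hf
  set d : ℝ → ℝ := fun t => (-(μ • (E * G t + G t * E + (2 * m) • (G t * G t)))).trace with hd
  have htr : ∀ t, 0 ≤ t → HasDerivAt f (d t) t := by
    intro t ht
    have : HasDerivAt (fun s => ∑ i, G s i i)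
        (∑ i, (-(μ • (E * G t + G t * E + (2 * m) • (G t * G t)))) i i) t :=
      HasDerivAt.fun_sum fun i _ => part1 t ht i i
    simpa [hf, hd, Matrix.trace, Matrix.diag] using this
  have hEG : ∀ t, 0 ≤ (E * G t).trace := by
    intro t
    have h1 : (E * G t).trace = ((H2 t)ᴴ * E * H2 t).trace := by
      rw [hG, ← Matrix.mul_assoc, Matrix.trace_mul_comm]
      simp [Matrix.mul_assoc]
    rw [h1]
    exact psd_trace_nonneg (hE.conjTranspose_mul_mul_same (H2 t))
  have hGG : ∀ t, (G t * G t).trace = ∑ i, ∑ j, (G t i j) ^ 2 := by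
    intro t
    rw [Matrix.trace]
    refine Finset.sum_congr rfl fun i _ => ?_
    simp only [Matrix.diag, Matrix.mul_apply]
    refine Finset.sum_congr rfl fun j _ => ?_
    have : G t j i = G t i j := by
      conv_lhs => rw [← hGsymm t]
      rw [transpose_apply]
    rw [this, sq]
  have hGGnn : ∀ t, 0 ≤ (G t * G t).trace := by
    intro t; rw [hGG]; positivity
  have hfnn : ∀ t, 0 ≤ f t := by
    intro t
    have : (G t).PosSemidef := by
      rw [hG]
      simpa using posSemidef_self_mul_conjTranspose (H2 t)
    exact psd_trace_nonneg this
  have hcs : ∀ t, f t ^ 2 ≤ n * (G t * G t).trace := by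
    intro t
    have h1 : (∑ i, G t i i) ^ 2 ≤ ((Finset.univ : Finset (Fin n)).card : ℝ) * ∑ i, (G t i i) ^ 2 := by
      exact_mod_cast sq_sum_le_card_mul_sum_sq (s := (Finset.univ : Finset (Fin n)))
        (f := fun i => G t i i)
    have h2 : ∑ i, (G t i i) ^ 2 ≤ ∑ i, ∑ j, (G t i j) ^ 2 := by
      refine Finset.sum_le_sum fun i _ => ?_
      exact Finset.single_le_sum (f := fun j => (G t i j) ^ 2)
        (fun j _ => sq_nonneg _) (Finset.mem_univ i)
    rw [hGG]
    calc f t ^ 2 = (∑ i, G t i i) ^ 2 := by simp [hf, Matrix.trace, Matrix.diag]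
      _ ≤ ((Finset.univ : Finset (Fin n)).card : ℝ) * ∑ i, (G t i i) ^ 2 := h1
      _ ≤ (n : ℝ) * ∑ i, ∑ j, (G t i j) ^ 2 := by
          simp only [Finset.card_univ, Fintype.card_fin]
          exact mul_le_mul_of_nonneg_left h2 (by positivity)
  have hdval : ∀ t, d t = -(μ * (2 * (E * G t).trace + 2 * m * (G t * G t).trace)) := by
    intro t
    simp only [hd, Matrix.trace_neg, Matrix.trace_smul, Matrix.trace_add, smul_eq_mul]
    rw [Matrix.trace_mul_comm (G t) E]
    ring
  have hd1 : ∀ t, d t ≤ -(2 * μ * m) * (G t * G t).trace := by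
    intro t
    rw [hdval]
    nlinarith [hEG t, hμ.le]
  have hd2 : ∀ t, -(2 * μ * m) * (G t * G t).trace ≤ -(2 * μ * m / n) * f t ^ 2 := by
    intro t
    have hn' : (0 : ℝ) < n := by exact_mod_cast hn
    have := hcs t
    rw [neg_mul, neg_mul, neg_le_neg_iff]
    rw [div_mul_eq_mul_div, div_le_iff₀ hn']
    nlinarith [mul_le_mul_of_nonneg_left (hcs t) (by positivity : (0:ℝ) ≤ 2 * μ * m)]
  have hdnp : ∀ t, d t ≤ 0 := by
    intro t
    have h := mul_nonneg (show (0:ℝ) ≤ 2 * μ * m by positivity) (hGGnn t)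
    linarith [hd1 t]
  -- antitone on Ici 0
  have hcont : ContinuousOn f (Set.Ici 0) := fun t ht =>
    ((htr t ht).continuousAt).continuousWithinAt
  have hanti : AntitoneOn f (Set.Ici 0) := by
    refine antitoneOn_of_deriv_nonpos (convex_Ici 0) hcont ?_ ?_
    · intro x hx; rw [interior_Ici] at hx
      exact ((htr x hx.le).differentiableAt).differentiableWithinAt
    · intro x hx; rw [interior_Ici] at hx
      rw [(htr x hx.le).deriv]; exact hdnp x
  -- limit of trace
  have htend : Filter.Tendsto f Filter.atTop (nhds 0) := by
    set g : ℝ → ℝ := fun t => f (max t 0) with hg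
    have hganti : Antitone g := fun a b hab =>
      hanti (le_max_right a 0) (le_max_right b 0) (max_le_max hab le_rfl)
    have hbdd : BddBelow (Set.range g) := ⟨0, by rintro x ⟨t, rfl⟩; exact hfnn _⟩
    have hgt : Filter.Tendsto g Filter.atTop (nhds (⨅ t, g t)) :=
      tendsto_atTop_ciInf hganti hbdd
    set L := ⨅ t, g t with hL
    have hL0 : 0 ≤ L := le_ciInf fun t => hfnn _
    have hgL : ∀ t, L ≤ g t := fun t => ciInf_le hbdd t
    have hLzero : L = 0 := by
      by_contra hne
      have hLpos : 0 < L := lt_of_le_of_ne hL0 (Ne.symm hne)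
      have hn' : (0 : ℝ) < n := by exact_mod_cast hn
      set c : ℝ := 2 * μ * m / n with hc
      have hcpos : 0 < c := by positivity
      have hfL : ∀ t, 0 ≤ t → L ≤ f t := by
        intro t ht
        have h2 : g t = f t := by simp [hg, max_eq_left ht]
        rw [← h2]; exact hgL t
      set φ : ℝ → ℝ := fun t => f t + c * L ^ 2 * t with hφ
      have hφd : ∀ t, 0 ≤ t → HasDerivAt φ (d t + c * L ^ 2) t := by
        intro t ht
        have h2 : HasDerivAt (fun s : ℝ => c * L ^ 2 * s) (c * L ^ 2) t := by
          simpa using (hasDerivAt_id t).const_mul (c * L ^ 2)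
        exact (htr t ht).add h2
      have hφnp : ∀ t, 0 ≤ t → d t + c * L ^ 2 ≤ 0 := by
        intro t ht
        have h1 : d t ≤ -c * f t ^ 2 := (hd1 t).trans (hd2 t)
        have h2 : L ^ 2 ≤ f t ^ 2 := by
          have := hfL t ht
          nlinarith
        nlinarith
      have hφanti : AntitoneOn φ (Set.Ici 0) := by
        refine antitoneOn_of_deriv_nonpos (convex_Ici 0) ?_ ?_ ?_
        · exact fun t ht => ((hφd t ht).continuousAt).continuousWithinAt
        · intro x hx; rw [interior_Ici] at hx
          exact ((hφd x hx.le).differentiableAt).differentiableWithinAt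
        · intro x hx; rw [interior_Ici] at hx
          rw [(hφd x hx.le).deriv]; exact hφnp x hx.le
      set t₀ : ℝ := (f 0 + 1) / (c * L ^ 2) with ht₀
      have ht₀pos : 0 < t₀ := by
        refine div_pos (by linarith [hfnn 0]) (mul_pos hcpos (pow_pos hLpos 2))
      have := hφanti (Set.self_mem_Ici) (Set.mem_Ici.mpr ht₀pos.le) ht₀pos.le
      have hval : c * L ^ 2 * t₀ = f 0 + 1 := by
        rw [ht₀]; field_simp
      have : f t₀ ≤ -1 := by
        simp only [hφ] at this
        rw [hval] at this
        linarith
      linarith [hfnn t₀]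
    have : Filter.Tendsto g Filter.atTop (nhds 0) := hLzero ▸ hgt
    refine this.congr' ?_
    filter_upwards [Filter.eventually_ge_atTop (0 : ℝ)] with t ht
    simp [hg, max_eq_left ht]
  -- H2 → 0
  refine ⟨part1, fun t ht => ⟨d t, htr t ht, hd1 t, (hd1 t).trans (hd2 t)⟩, htend, ?_⟩
  intro i j
  have hbound : ∀ t, |H2 t i j| ≤ Real.sqrt (f t) := by
    intro t
    apply Real.abs_le_sqrt
    have h1 : H2 t i j ^ 2 ≤ G t i i := by
      rw [hG]
      simp only [Matrix.mul_apply, transpose_apply]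
      have := Finset.single_le_sum (f := fun l => H2 t i l * H2 t i l)
        (fun l _ => mul_self_nonneg _) (Finset.mem_univ j)
      calc H2 t i j ^ 2 = H2 t i j * H2 t i j := sq _
        _ ≤ ∑ l, H2 t i l * H2 t i l := this
    have h2 : G t i i ≤ f t := by
      simp only [hf, Matrix.trace, Matrix.diag]
      refine Finset.single_le_sum (f := fun l => G t l l) ?_ (Finset.mem_univ i)
      intro l _
      rw [hG]
      simp only [Matrix.mul_apply, transpose_apply]
      exact Finset.sum_nonneg fun _ _ => mul_self_nonneg _
    linarith
  have hsqrt : Filter.Tendsto (fun t => Real.sqrt (f t)) Filter.atTop (nhds 0) := by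
    have := (Real.continuous_sqrt.continuousAt (x := (0:ℝ))).tendsto.comp htend
    simpa [Function.comp_def] using this
  exact squeeze_zero_norm (fun t => by simpa using hbound t) hsqrt
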